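/- For every integer n ≥ 2 and every n-vertex finite simple graph G, there exists a finite simple graph G' with fewer than n² vertices such that G' has sd-degeneracy at most 1 and G is an induced subgraph of G'. -/

import Mathlib

open scoped symmDiff

/-- `sdAt G u v` is the number of vertices outside `{u, v}` adjacent to exactly one of `u, v`. -/
noncomputable def sdAt {V : Type*} (G : SimpleGraph V) (u v : V) : ℕ :=
  ((G.neighborSet u \ {v}) ∆ (G.neighborSet v \ {u})).ncard

/-- `G` has sd-degeneracy at most `d`: either it has a single vertex, or there is an ordering
`v_1, …, v_n` of the vertices such that each `v_i` (for `i < n`) has a `d`-twin among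
`v_{i+1}, …, v_n` in the subgraph induced by `{v_i, …, v_n}`. -/
def SddLE {V : Type*} [Fintype V] (G : SimpleGraph V) (d : ℕ) : Prop :=
  Fintype.card V = 1 ∨
  ∃ e : Fin (Fintype.card V) ≃ V,
    ∀ i : Fin (Fintype.card V), (i : ℕ) < Fintype.card V - 1 →
      ∃ j : Fin (Fintype.card V), ∃ hij : i < j,
        sdAt (G.induce {x | ∃ k, i ≤ k ∧ e k = x})
          ⟨e i, ⟨i, le_refl i, rfl⟩⟩ ⟨e j, ⟨j, le_of_lt hij, rfl⟩⟩ ≤ d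

/-! ### Auxiliary lemmas -/

lemma ncard_le_one_of_subsing {α : Type*} {s : Set α}
    (h : ∀ a ∈ s, ∀ b ∈ s, a = b) : s.ncard ≤ 1 := by
  rcases s.eq_empty_or_nonempty with rfl | ⟨a, ha⟩
  · simp
  · have hs : s ⊆ {a} := fun b hb => by simp [h b hb a ha]
    calc s.ncard ≤ ({a} : Set α).ncard := Set.ncard_le_ncard hs (Set.finite_singleton a)
    _ = 1 := Set.ncard_singleton a

section Construction

variable {n : ℕ}

/-- Block/offset arithmetic: `(i*n + c)/n = i` for `c < n`. -/
lemma blk_div {i c : ℕ} (hn : 0 < n) (hc : c < n) : (i * n + c) / n = i := by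
  rw [Nat.add_comm, Nat.add_mul_div_right _ _ hn, Nat.div_eq_of_lt hc, Nat.zero_add]

lemma blk_mod {i c : ℕ} (hc : c < n) : (i * n + c) % n = c := by
  rw [Nat.add_comm, Nat.add_mul_mod_self_right, Nat.mod_eq_of_lt hc]

lemma blk_le {i c k : ℕ} (hn : 0 < n) (hc : c < n) :
    i * n + c ≤ k * n ↔ i < k ∨ (c = 0 ∧ i ≤ k) := by
  constructor
  · intro h
    rcases Nat.lt_or_ge i k with h' | h'
    · exact Or.inl h'
    · have hki : k * n ≤ i * n := Nat.mul_le_mul_right n h'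
      have hc0 : c = 0 := by
        have : i * n + c ≤ i * n := le_trans h hki
        omega
      have : i * n ≤ k * n := by omega
      have : i ≤ k := Nat.le_of_mul_le_mul_right this hn
      exact Or.inr ⟨hc0, this⟩
  · rintro (h | ⟨rfl, h⟩)
    · have : i * n + c < k * n := calc
        i * n + c < i * n + n := by omega
        _ = (i + 1) * n := by ring
        _ ≤ k * n := Nat.mul_le_mul_right n h
      omega
    · simpa using Nat.mul_le_mul_right n h

/-- The vertex `a : Fin ((n-1)*n+1)` belongs to block `a/n`. -/
def bdiv (hn : 2 ≤ n) (a : Fin ((n - 1) * n + 1)) : Fin n :=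
  ⟨a.val / n, by
    have h1 : a.val ≤ (n - 1) * n := by have := a.isLt; omega
    have h2 : a.val / n ≤ ((n - 1) * n) / n := Nat.div_le_div_right h1
    have h3 : ((n - 1) * n) / n = n - 1 := Nat.mul_div_cancel _ (by omega)
    omega⟩

@[simp] lemma bdiv_val (hn : 2 ≤ n) (a : Fin ((n - 1) * n + 1)) :
    (bdiv hn a).val = a.val / n := rfl

/-- The supergraph: block `i` consists of the real vertex `vᵢ` at position `i*n`
and auxiliary vertices `c_{i,j}` at positions `i*n + j` for `1 ≤ j ≤ n-1`, where
`c_{i,j}` is adjacent exactly to the real vertices `v_k` with `k ≥ max (j, i+1)`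
and `v_k ~ v_i` in `G`.  (The last block, block `n-1`, consists of the single
vertex `v_{n-1}` at position `(n-1)*n`.) -/
def GP (hn : 2 ≤ n) (G : SimpleGraph (Fin n)) : SimpleGraph (Fin ((n - 1) * n + 1)) :=
  SimpleGraph.fromRel (fun a b =>
    a.val % n = 0 ∧ G.Adj (bdiv hn a) (bdiv hn b) ∧
      (b.val % n = 0 ∨ (b.val % n ≤ a.val / n ∧ b.val / n < a.val / n)))

variable (hn : 2 ≤ n) (G : SimpleGraph (Fin n))

/-- Characterization of adjacency `a ~ b` in `GP` when `a ≤ b`. -/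
lemma GP_adj_upward {a b : Fin ((n - 1) * n + 1)} (hab : a.val ≤ b.val) :
    (GP hn G).Adj a b ↔
      b.val % n = 0 ∧ a.val % n ≤ b.val / n ∧ a.val / n < b.val / n ∧
        G.Adj (bdiv hn b) (bdiv hn a) := by
  have hn0 : 0 < n := by omega
  have hdiv : a.val / n ≤ b.val / n := Nat.div_le_div_right hab
  constructor
  · intro h
    rw [GP, SimpleGraph.fromRel_adj] at h
    obtain ⟨hne, h | h⟩ := h
    · -- r a b : a is real
      obtain ⟨ha0, hadj, hc⟩ := h
      rcases hc with hb0 | ⟨h1, h2⟩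
      · -- b real
        have hne' : (bdiv hn a) ≠ (bdiv hn b) := hadj.ne
        have hltdiv : a.val / n < b.val / n := by
          rcases Nat.lt_or_ge (a.val / n) (b.val / n) with h' | h'
          · exact h'
          · exfalso
            have : a.val / n = b.val / n := le_antisymm hdiv h'
            exact hne' (Fin.ext (by simpa using this))
        exact ⟨hb0, by rw [ha0]; exact Nat.zero_le _, hltdiv, hadj.symm⟩
      · omega
    · -- r b a : b is real
      obtain ⟨hb0, hadj, hc⟩ := h
      rcases hc with ha0 | ⟨h1, h2⟩
      · -- a also real
        have hne' : (bdiv hn b) ≠ (bdiv hn a) := hadj.ne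
        have hltdiv : a.val / n < b.val / n := by
          rcases Nat.lt_or_ge (a.val / n) (b.val / n) with h' | h'
          · exact h'
          · exfalso
            have : a.val / n = b.val / n := le_antisymm hdiv h'
            exact hne' (Fin.ext (by simpa using this.symm))
        exact ⟨hb0, by rw [ha0]; exact Nat.zero_le _, hltdiv, hadj⟩
      · exact ⟨hb0, h1, h2, hadj⟩
  · rintro ⟨hb0, h1, h2, hadj⟩
    rw [GP, SimpleGraph.fromRel_adj]
    refine ⟨?_, Or.inr ⟨hb0, hadj, Or.inr ⟨h1, h2⟩⟩⟩
    intro hEq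
    rw [hEq] at h2
    omega

/-- The real vertices form an induced copy of `G`. -/
noncomputable def GPembed : G ↪g (GP hn G) := by
  have hn0 : 0 < n := by omega
  refine ⟨⟨fun v => ⟨v.val * n, by
        have : v.val ≤ n - 1 := by have := v.isLt; omega
        have := Nat.mul_le_mul_right n this
        omega⟩, ?_⟩, ?_⟩
  · intro a b hab
    have : a.val * n = b.val * n := by
      simpa using congrArg Fin.val hab
    exact Fin.ext (Nat.eq_of_mul_eq_mul_right hn0 this)
  · intro a b
    show (GP hn G).Adj ⟨a.val * n, _⟩ ⟨b.val * n, _⟩ ↔ G.Adj a b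
    rw [GP, SimpleGraph.fromRel_adj]
    have hmod : ∀ c : Fin n, (c.val * n) % n = 0 := fun c => Nat.mul_mod_left _ _
    have hdiv : ∀ c : Fin n, (c.val * n) / n = c.val := fun c => Nat.mul_div_cancel _ hn0
    have hb : ∀ c : Fin n, bdiv hn ⟨c.val * n, by
        have : c.val ≤ n - 1 := by have := c.isLt; omega
        have := Nat.mul_le_mul_right n this
        omega⟩ = c := fun c => Fin.ext (by simp [hdiv c])
    constructor
    · rintro ⟨hne, h | h⟩
      · obtain ⟨_, hadj, _⟩ := h
        rw [hb, hb] at hadj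
        exact hadj
      · obtain ⟨_, hadj, _⟩ := h
        rw [hb, hb] at hadj
        exact hadj.symm
    · intro hadj
      refine ⟨?_, Or.inl ⟨hmod a, ?_, Or.inl (hmod b)⟩⟩
      · intro hEq
        have : a.val * n = b.val * n := by simpa using congrArg Fin.val hEq
        exact hadj.ne (Fin.ext (Nat.eq_of_mul_eq_mul_right hn0 this))
      · rw [hb, hb]; exact hadj


/-- Adjacency in an induced subgraph, at the level of the ambient graph. -/
lemma induce_adj_val {S : Set (Fin ((n - 1) * n + 1))} (a b : ↥S) :
    ((GP hn G).induce S).Adj a b ↔ (GP hn G).Adj ↑a ↑b := Iff.rfl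

/-- Characterization of adjacency `a ~ b` in `GP` when `a` is an auxiliary vertex. -/
lemma GP_adj_aux {a b : Fin ((n - 1) * n + 1)} (ha : a.val % n ≠ 0) :
    (GP hn G).Adj a b ↔
      b.val % n = 0 ∧ a.val % n ≤ b.val / n ∧ a.val / n < b.val / n ∧
        G.Adj (bdiv hn b) (bdiv hn a) := by
  rw [GP, SimpleGraph.fromRel_adj]
  constructor
  · rintro ⟨hne, ⟨ha0, -, -⟩ | ⟨hb0, hadj, hc⟩⟩
    · exact absurd ha0 ha
    · rcases hc with ha0 | ⟨h1, h2⟩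
      · exact absurd ha0 ha
      · exact ⟨hb0, h1, h2, hadj⟩
  · rintro ⟨hb0, h1, h2, hadj⟩
    refine ⟨fun hEq => ?_, Or.inr ⟨hb0, hadj, Or.inr ⟨h1, h2⟩⟩⟩
    rw [hEq] at h2; omega

/-- The key computation: in the subgraph of `GP` induced on the up-set `{x | t ≤ x}`,
the vertex at position `t` and its designated partner have at most one
distinguishing vertex. -/
lemma sd_step (t : ℕ) (ht : t < (n - 1) * n)
    (S : Set (Fin ((n - 1) * n + 1)))
    (hS : ∀ x : Fin ((n - 1) * n + 1), x ∈ S ↔ t ≤ x.val)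
    (u v : ↥S) (hu : (u : Fin ((n - 1) * n + 1)).val = t)
    (hv : (v : Fin ((n - 1) * n + 1)).val
        = if t % n = n - 1 then min (t + n) ((n - 1) * n) else t + 1) :
    sdAt ((GP hn G).induce S) u v ≤ 1 := by
  have hn0 : 0 < n := by omega
  have hj0 : t % n < n := Nat.mod_lt _ hn0
  have hdecomp : (t / n) * n + t % n = t := by
    rw [Nat.mul_comm]; exact Nat.div_add_mod t n
  have hwS : ∀ w : ↥S, t ≤ (w : Fin ((n - 1) * n + 1)).val := fun w => (hS _).1 w.2
  have hsub : ∀ w z : ↥S,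
      (w : Fin ((n - 1) * n + 1)).val = (z : Fin ((n - 1) * n + 1)).val → w = z :=
    fun w z h => Subtype.ext (Fin.ext h)
  have hWle : ∀ w : ↥S, (w : Fin ((n - 1) * n + 1)).val ≤ (n - 1) * n := fun w => by
    have := (w : Fin ((n - 1) * n + 1)).isLt; omega
  have hdivle : ∀ w : ↥S, (w : Fin ((n - 1) * n + 1)).val / n ≤ n - 1 := fun w => by
    have h1 := Nat.div_le_div_right (c := n) (hWle w)
    rwa [Nat.mul_div_cancel _ hn0] at h1
  have hWmul : ∀ w : ↥S, (w : Fin ((n - 1) * n + 1)).val % n = 0 →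
      ((w : Fin ((n - 1) * n + 1)).val / n) * n = (w : Fin ((n - 1) * n + 1)).val :=
    fun w h => Nat.div_mul_cancel (Nat.dvd_of_mod_eq_zero h)
  have hadj_u : ∀ w : ↥S, ((GP hn G).induce S).Adj u w ↔
      ((w : Fin ((n - 1) * n + 1)).val % n = 0 ∧
        t % n ≤ (w : Fin ((n - 1) * n + 1)).val / n ∧
        t / n < (w : Fin ((n - 1) * n + 1)).val / n ∧
        G.Adj (bdiv hn ↑w) (bdiv hn ↑u)) := by
    intro w
    rw [induce_adj_val hn G, GP_adj_upward hn G (by rw [hu]; exact hwS w), hu]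
  unfold sdAt
  apply ncard_le_one_of_subsing
  intro w₁ hw₁ w₂ hw₂
  by_cases hB : t % n = n - 1
  · rw [if_pos hB] at hv
    by_cases hB1 : t = (n - 1) * n - 1
    · -- terminal case: only two vertices remain, the symmetric difference is empty
      have hv' : (v : Fin ((n - 1) * n + 1)).val = (n - 1) * n := by rw [hv]; omega
      exfalso
      simp only [Set.mem_symmDiff, Set.mem_diff, SimpleGraph.mem_neighborSet,
        Set.mem_singleton_iff] at hw₁
      rcases hw₁ with ⟨⟨h1, h2⟩, -⟩ | ⟨⟨h1, h2⟩, -⟩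
      · have hne : ¬ w₁ = u := fun hEq => h1.ne hEq.symm
        have hWnet : (w₁ : Fin ((n - 1) * n + 1)).val ≠ t :=
          fun hEq => hne (hsub _ _ (by rw [hEq, hu]))
        have hWnev : (w₁ : Fin ((n - 1) * n + 1)).val ≠ (n - 1) * n :=
          fun hEq => h2 (hsub _ _ (by rw [hEq, hv']))
        have := hwS w₁
        have := hWle w₁
        omega
      · have hne : ¬ w₁ = v := fun hEq => h1.ne hEq.symm
        have hWnev : (w₁ : Fin ((n - 1) * n + 1)).val ≠ (n - 1) * n :=
          fun hEq => hne (hsub _ _ (by rw [hEq, hv']))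
        have hWnet : (w₁ : Fin ((n - 1) * n + 1)).val ≠ t :=
          fun hEq => h2 (hsub _ _ (by rw [hEq, hu]))
        have := hwS w₁
        have := hWle w₁
        omega
    · -- middle of a block boundary: partner is the corresponding vertex of the next block
      have e1 : (t / n + 1) * n = (t / n) * n + n := by ring
      have e2 : (t / n + 2) * n = (t / n) * n + n + n := by ring
      have l1 : (t / n + 1) * n < (n - 1) * n := by omega
      have l2 : t / n + 1 < n - 1 := by
        by_contra hcon
        push_neg at hcon
        exact absurd (Nat.mul_le_mul_right n hcon) (by omega)
      have l4 : (t / n + 2) * n ≤ (n - 1) * n := Nat.mul_le_mul_right n (by omega)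
      have hv' : (v : Fin ((n - 1) * n + 1)).val = t + n := by rw [hv]; omega
      have hdecv : (t / n + 1) * n + (n - 1) = t + n := by omega
      have hvmod : (v : Fin ((n - 1) * n + 1)).val % n = n - 1 := by
        rw [hv', ← hdecv]; exact blk_mod (by omega)
      have hvne0 : (v : Fin ((n - 1) * n + 1)).val % n ≠ 0 := by omega
      have key : ∀ w : ↥S,
          w ∈ (((GP hn G).induce S).neighborSet u \ {v})
            ∆ (((GP hn G).induce S).neighborSet v \ {u}) →
          (w : Fin ((n - 1) * n + 1)).val = (n - 1) * n := by
        intro w hw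
        simp only [Set.mem_symmDiff, Set.mem_diff, SimpleGraph.mem_neighborSet,
          Set.mem_singleton_iff] at hw
        rcases hw with ⟨⟨h1, -⟩, -⟩ | ⟨⟨h1, -⟩, -⟩
        · rw [hadj_u w] at h1
          obtain ⟨hw0, hj0k, -, -⟩ := h1
          have h5 := hdivle w
          have h6 := hWmul w hw0
          have : (w : Fin ((n - 1) * n + 1)).val / n = n - 1 := by omega
          rw [← h6, this]
        · rw [induce_adj_val hn G, GP_adj_aux hn G hvne0] at h1
          obtain ⟨hw0, hj0k, -, -⟩ := h1
          rw [hvmod] at hj0k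
          have h5 := hdivle w
          have h6 := hWmul w hw0
          have : (w : Fin ((n - 1) * n + 1)).val / n = n - 1 := by omega
          rw [← h6, this]
      exact hsub _ _ ((key w₁ hw₁).trans (key w₂ hw₂).symm)
  · -- interior of a block: partner is the next vertex
    rw [if_neg hB] at hv
    have hj1 : t % n + 1 < n := by omega
    have hdecv : (t / n) * n + (t % n + 1) = t + 1 := by omega
    have hvmod : (v : Fin ((n - 1) * n + 1)).val % n = t % n + 1 := by
      rw [hv, ← hdecv]; exact blk_mod hj1
    have hvdiv : (v : Fin ((n - 1) * n + 1)).val / n = t / n := by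
      rw [hv, ← hdecv]; exact blk_div hn0 hj1
    have hvne0 : (v : Fin ((n - 1) * n + 1)).val % n ≠ 0 := by omega
    have hbdiv_uv : bdiv hn (v : Fin ((n - 1) * n + 1)) = bdiv hn (u : Fin ((n - 1) * n + 1)) :=
      Fin.ext (by rw [bdiv_val, bdiv_val, hvdiv, hu])
    have key : ∀ w : ↥S,
        w ∈ (((GP hn G).induce S).neighborSet u \ {v})
          ∆ (((GP hn G).induce S).neighborSet v \ {u}) →
        (w : Fin ((n - 1) * n + 1)).val = (t % n) * n := by
      intro w hw
      simp only [Set.mem_symmDiff, Set.mem_diff, SimpleGraph.mem_neighborSet,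
        Set.mem_singleton_iff] at hw
      rcases hw with ⟨⟨h1, h2⟩, h3⟩ | ⟨⟨h1, h2⟩, h3⟩
      · rw [hadj_u w] at h1
        obtain ⟨hw0, hj0k, hi0k, hAdj⟩ := h1
        have hWnet : (w : Fin ((n - 1) * n + 1)).val ≠ t := by
          intro hEq; rw [hEq] at hi0k; omega
        have hwu : ¬ w = u := fun hEq => hWnet (by rw [hEq, hu])
        have h4 : ¬ ((GP hn G).induce S).Adj v w := fun hAv => h3 ⟨hAv, hwu⟩
        rw [induce_adj_val hn G, GP_adj_aux hn G hvne0, hvmod, hvdiv, hbdiv_uv] at h4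
        have h5 : ¬ (t % n + 1 ≤ (w : Fin ((n - 1) * n + 1)).val / n) :=
          fun hle => h4 ⟨hw0, hle, hi0k, hAdj⟩
        have h6 := hWmul w hw0
        have h7 : (w : Fin ((n - 1) * n + 1)).val / n = t % n := by omega
        rw [← h6, h7]
      · rw [induce_adj_val hn G, GP_adj_aux hn G hvne0, hvmod, hvdiv, hbdiv_uv] at h1
        obtain ⟨hw0, h1b, h1c, hAdj⟩ := h1
        exfalso
        have hwv : ¬ w = v := by
          intro hEq; rw [hEq, hvmod] at hw0; omega
        exact h3 ⟨(hadj_u w).2 ⟨hw0, by omega, h1c, hAdj⟩, hwv⟩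
    exact hsub _ _ ((key w₁ hw₁).trans (key w₂ hw₂).symm)

end Construction

theorem exists_sddLE_one_superGraph (n : ℕ) (hn : 2 ≤ n) (G : SimpleGraph (Fin n)) :
    ∃ m : ℕ, m < n ^ 2 ∧ ∃ G' : SimpleGraph (Fin m), SddLE G' 1 ∧ Nonempty (G ↪g G') := by
  have hn0 : 0 < n := by omega
  set M : ℕ := (n - 1) * n + 1 with hM
  refine ⟨M, ?_, GP hn G, ?_, ⟨GPembed hn G⟩⟩
  · -- M < n^2
    have h1 : (n - 1) * n + n = n * n := by
      have : (n - 1) + 1 = n := by omega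
      calc (n - 1) * n + n = ((n - 1) + 1) * n := by ring
      _ = n * n := by rw [this]
    have : n ^ 2 = n * n := by ring
    omega
  · -- SddLE (GP hn G) 1
    right
    have hc : Fintype.card (Fin M) = M := Fintype.card_fin M
    refine ⟨finCongr hc, ?_⟩
    intro i hi
    have hi' : (i : ℕ) < M - 1 := by omega
    set t := (i : ℕ) with htdef
    have htM : t < (n - 1) * n := by omega
    set t' : ℕ := if t % n = n - 1 then min (t + n) ((n - 1) * n) else t + 1 with ht'def
    have ht'1 : t < t' := by
      by_cases h : t % n = n - 1 <;> simp only [ht'def, h, if_true, if_false] <;> omega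
    have ht'2 : t' < M := by
      by_cases h : t % n = n - 1 <;> simp only [ht'def, h, if_true, if_false] <;> omega
    refine ⟨⟨t', by rw [hc]; exact ht'2⟩, by rw [Fin.lt_def]; exact ht'1, ?_⟩
    apply sd_step hn G t htM
    · intro x
      constructor
      · rintro ⟨k, hk, rfl⟩
        rw [finCongr_apply, Fin.coe_cast]
        rw [Fin.le_def] at hk
        exact hk
      · intro hx
        refine ⟨⟨x.val, by rw [hc]; exact x.isLt⟩, ?_, ?_⟩
        · rw [Fin.le_def]; exact hx
        · apply Fin.ext
          rw [finCongr_apply, Fin.coe_cast]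
    · show ((finCongr hc) i).val = t
      rw [finCongr_apply, Fin.coe_cast]
    · show ((finCongr hc) ⟨t', _⟩).val = _
      rw [finCongr_apply, Fin.coe_cast]
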